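/- For every q ≥ 1 and every r with 1 ≤ r ≤ q, the (r+1)-st term of the lower central series of the generalized quaternion group Q_{2^{q+1}} ⊆ SU(2) satisfies Γ^{r+1}(Q_{2^{q+1}}) = μ_{2^{q−r}} (where μ_1 is the trivial subgroup). In particular, Q_{2^{q+1}} has nilpotency class exactly q. -/

import Mathlib

open Matrix Complex

noncomputable section

abbrev SU2 := Matrix.specialUnitaryGroup (Fin 2) ℂ

instance SU2.instGroup : Group SU2 :=
  { (inferInstance : Monoid SU2) with
    inv := fun A => ⟨star A.1, by
      rcases A.2 with ⟨hu, hd⟩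
      refine ⟨⟨?_, ?_⟩, ?_⟩
      · simpa using hu.2
      · simpa using hu.1
      · show (star A.1).det = 1
        rw [Matrix.star_eq_conjTranspose, Matrix.det_conjTranspose]
        simp [show A.1.det = 1 from hd]⟩
    inv_mul_cancel := fun A => Subtype.ext A.2.1.1 }

lemma w_mem : !![(0:ℂ), -1; 1, 0] ∈ Matrix.specialUnitaryGroup (Fin 2) ℂ := by
  rw [Matrix.mem_specialUnitaryGroup_iff, Matrix.mem_unitaryGroup_iff]
  constructor
  · ext i j
    fin_cases i <;> fin_cases j <;>
      simp [Matrix.mul_apply, Fin.sum_univ_two, Matrix.star_apply, Complex.star_def]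
  · simp [Matrix.det_fin_two]

def w : SU2 := ⟨!![(0:ℂ), -1; 1, 0], w_mem⟩

lemma xi_conj (m : ℕ) : (starRingEnd ℂ) (2 * Real.pi * Complex.I / m) =
    -(2 * Real.pi * Complex.I / m) := by
  simp [map_div₀, Complex.conj_I, Complex.conj_ofReal, map_ofNat]
  ring

lemma xi_conj_exp (m : ℕ) : (starRingEnd ℂ) (Complex.exp (2 * Real.pi * Complex.I / m)) =
    Complex.exp (-(2 * Real.pi * Complex.I / m)) := by
  rw [← Complex.exp_conj, xi_conj]

lemma xi_conj_exp' (m : ℕ) : (starRingEnd ℂ) (Complex.exp (-(2 * Real.pi * Complex.I / m))) =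
    Complex.exp (2 * Real.pi * Complex.I / m) := by
  rw [← Complex.exp_conj, map_neg, xi_conj, neg_neg]

lemma xi_mem (m : ℕ) :
    !![Complex.exp (2 * Real.pi * Complex.I / m), 0; 0,
       Complex.exp (-(2 * Real.pi * Complex.I / m))]
      ∈ Matrix.specialUnitaryGroup (Fin 2) ℂ := by
  rw [Matrix.mem_specialUnitaryGroup_iff, Matrix.mem_unitaryGroup_iff]
  have hstar : star (!![Complex.exp (2 * Real.pi * Complex.I / m), 0; 0,
       Complex.exp (-(2 * Real.pi * Complex.I / m))]) =
      !![Complex.exp (-(2 * Real.pi * Complex.I / m)), 0; 0,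
       Complex.exp (2 * Real.pi * Complex.I / m)] := by
    ext i j
    fin_cases i <;> fin_cases j <;>
      simp [Matrix.star_apply, Complex.star_def, xi_conj_exp m, xi_conj_exp' m]
  constructor
  · rw [hstar]
    ext i j
    fin_cases i <;> fin_cases j <;>
      simp [Matrix.mul_apply, Fin.sum_univ_two, ← Complex.exp_add]
  · simp [Matrix.det_fin_two, ← Complex.exp_add]

def ξ (m : ℕ) : SU2 :=
  ⟨!![Complex.exp (2 * Real.pi * Complex.I / m), 0; 0,
      Complex.exp (-(2 * Real.pi * Complex.I / m))], xi_mem m⟩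

/-- `μ m` : the cyclic subgroup of `SU2` generated by `ξ m`. -/
def μ (m : ℕ) : Subgroup SU2 := Subgroup.zpowers (ξ m)

/-- `genQ q` is the generalized quaternion group `Q_{2^{q+1}} ⊆ SU2`,
generated by `ξ_{2^q}` and `w`. -/
def genQ (q : ℕ) : Subgroup SU2 := Subgroup.closure {ξ (2 ^ q), w}

/-- Lower central series of a subgroup, as subgroups of the ambient group:
`lcs H k = Γ^{k+1}(H)`, so `lcs H 0 = Γ¹(H) = H` and `lcs H (k+1) = ⁅lcs H k, H⁆`. -/
def lcs {G : Type*} [Group G] (H : Subgroup G) : ℕ → Subgroup G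
  | 0 => H
  | (k + 1) => ⁅lcs H k, H⁆

/-- The set of diagonal matrices in `SU2`: the maximal torus `T`. -/
def Tset : Set SU2 :=
  {x | (x : Matrix (Fin 2) (Fin 2) ℂ) 0 1 = 0 ∧ (x : Matrix (Fin 2) (Fin 2) ℂ) 1 0 = 0}

/-- The set of anti-diagonal matrices in `SU2`: the coset `wT`. -/
def wTset : Set SU2 :=
  {x | (x : Matrix (Fin 2) (Fin 2) ℂ) 0 0 = 0 ∧ (x : Matrix (Fin 2) (Fin 2) ℂ) 1 1 = 0}

/-- `PU(2)`, the quotient of `SU(2)` by its center `{±I}`. -/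
abbrev PU2 := SU2 ⧸ Subgroup.center SU2


open scoped commutatorElement

lemma su2_ext {x y : SU2} (h : x.1 = y.1) : x = y := Subtype.ext h

lemma xi_sq (s : ℕ) : ξ (2^(s+1)) ^ 2 = ξ (2^s) := by
  have hne : ((2:ℂ))^s ≠ 0 := pow_ne_zero _ two_ne_zero
  have key : (2 * (Real.pi:ℂ) * Complex.I / ((2:ℂ)^(s+1))) + (2 * (Real.pi:ℂ) * Complex.I / ((2:ℂ)^(s+1))) = 2 * (Real.pi:ℂ) * Complex.I / ((2:ℂ)^s) := by
    field_simp
    ring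
  have key2 : (-(2 * (Real.pi:ℂ) * Complex.I / ((2:ℂ)^(s+1)))) + (-(2 * (Real.pi:ℂ) * Complex.I / ((2:ℂ)^(s+1)))) = -(2 * (Real.pi:ℂ) * Complex.I / ((2:ℂ)^s)) := by
    rw [← neg_add, key]
  apply su2_ext
  rw [sq]
  show (ξ (2^(s+1))).1 * (ξ (2^(s+1))).1 = _
  ext i j
  fin_cases i <;> fin_cases j <;>
    simp [ξ, Matrix.mul_apply, Fin.sum_univ_two, ← Complex.exp_add, key, key2]

lemma xi_pow (s k : ℕ) : ξ (2^(s+k)) ^ (2^k) = ξ (2^s) := by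
  induction k with
  | zero => simp
  | succ k ih =>
      have : (2:ℕ)^(k+1) = 2 * 2^k := by ring
      rw [show s + (k+1) = (s+k)+1 by ring, this, pow_mul, xi_sq, ih]

lemma xi_one_eq : ξ 1 = 1 := by
  have h1 : Complex.exp (2*(Real.pi:ℂ)*Complex.I) = 1 := Complex.exp_two_pi_mul_I
  have h2 : Complex.exp (-(2*(Real.pi:ℂ)*Complex.I)) = 1 := by
    rw [Complex.exp_neg, h1]; norm_num
  apply su2_ext
  show _ = (1 : Matrix (Fin 2) (Fin 2) ℂ)
  ext i j
  fin_cases i <;> fin_cases j <;> simp [ξ, h1, h2, Matrix.one_apply]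

lemma exp_half : Complex.exp (2*(Real.pi:ℂ)*Complex.I/(2:ℂ)) = -1 := by
  rw [show (2*(Real.pi:ℂ)*Complex.I/(2:ℂ)) = (Real.pi:ℂ) * Complex.I by ring]
  exact Complex.exp_pi_mul_I

lemma exp_half' : Complex.exp (-(2*(Real.pi:ℂ)*Complex.I/(2:ℂ))) = -1 := by
  rw [Complex.exp_neg, exp_half]; norm_num

lemma w_mul_w : w * w = ξ 2 := by
  apply su2_ext
  show w.1 * w.1 = (ξ 2).1
  ext i j
  fin_cases i <;> fin_cases j <;>
    simp [w, ξ, Matrix.mul_apply, Fin.sum_univ_two, exp_half, exp_half']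

lemma xi_two_ne_one : ξ 2 ≠ 1 := by
  intro h
  have := congrArg (fun x : SU2 => x.1 0 0) h
  simp [ξ, Matrix.one_apply] at this
  rw [exp_half] at this
  norm_num at this

lemma w_ne_one : w ≠ 1 := by
  intro h
  have := congrArg (fun x : SU2 => x.1 0 0) h
  simp [w, Matrix.one_apply] at this

lemma xi_w (m : ℕ) : ξ m * w = w * (ξ m)⁻¹ := by
  apply su2_ext
  show (ξ m).1 * w.1 = w.1 * star (ξ m).1
  ext i j
  fin_cases i <;> fin_cases j <;>
    simp [w, ξ, Matrix.mul_apply, Fin.sum_univ_two, Matrix.star_apply,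
      xi_conj_exp m, xi_conj_exp' m]

lemma wconj (m : ℕ) (n : ℤ) : (ξ m)^n * w = w * (ξ m)^(-n) := by
  have h : w⁻¹ * ξ m * w⁻¹⁻¹ = (ξ m)⁻¹ := by
    rw [inv_inv, mul_assoc, xi_w]
    group
  have h2 : (ξ m)^(-n) = w⁻¹ * (ξ m)^n * w := by
    rw [_root_.zpow_neg, ← _root_.inv_zpow, ← h, conj_zpow, inv_inv]
  rw [h2]
  group

lemma f0 (q : ℕ) (n m : ℤ) : ξ (2^q)^n * ξ (2^q)^m = ξ (2^q)^(n+m) := (_root_.zpow_add _ n m).symm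

lemma f1 (q : ℕ) (n m : ℤ) : ξ (2^q)^n * (w * ξ (2^q)^m) = w * ξ (2^q)^(m-n) := by
  rw [← mul_assoc, wconj, mul_assoc, ← _root_.zpow_add, neg_add_eq_sub]

lemma f2 (q : ℕ) (n m : ℤ) : (w * ξ (2^q)^n) * ξ (2^q)^m = w * ξ (2^q)^(n+m) := by
  rw [mul_assoc, ← _root_.zpow_add]

lemma wsq (q : ℕ) (hq : 1 ≤ q) : w * w = ξ (2^q) ^ ((2:ℤ)^(q-1)) := by
  have h1 : ξ 2 = ξ (2^q) ^ (2^(q-1) : ℕ) := by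
    have h := xi_pow 1 (q-1)
    rw [show 1 + (q-1) = q from by omega] at h
    norm_num at h
    exact h.symm
  rw [w_mul_w, h1, ← zpow_natCast]
  norm_cast

lemma apow (q : ℕ) : ξ (2^q) ^ ((2:ℤ)^q) = 1 := by
  have h := xi_pow 0 q
  rw [zero_add, pow_zero, xi_one_eq] at h
  rw [← h, ← zpow_natCast]
  norm_cast

lemma f3 (q : ℕ) (hq : 1 ≤ q) (n m : ℤ) :
    (w * ξ (2^q)^n) * (w * ξ (2^q)^m) = ξ (2^q)^((2:ℤ)^(q-1)+m-n) := by
  rw [mul_assoc, f1, ← mul_assoc, wsq q hq, ← _root_.zpow_add, add_sub_assoc]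

lemma pow_qsub1 (q : ℕ) (hq : 1 ≤ q) : (2:ℤ)^q = 2^(q-1) * 2 := by
  rw [← pow_succ]
  congr 1
  omega

lemma winv (q : ℕ) (hq : 1 ≤ q) (n : ℤ) :
    (w * ξ (2^q)^n)⁻¹ = w * ξ (2^q)^(n+(2:ℤ)^(q-1)) := by
  apply inv_eq_of_mul_eq_one_right
  rw [f3 q hq, show (2:ℤ)^(q-1) + (n + (2:ℤ)^(q-1)) - n = (2:ℤ)^q from by
        rw [pow_qsub1 q hq]; ring, apow q]

lemma comm_a_a (q : ℕ) (n m : ℤ) : ⁅ξ (2^q)^n, ξ (2^q)^m⁆ = 1 :=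
  commutatorElement_eq_one_iff_commute.mpr (Commute.zpow_zpow (Commute.refl _) n m)

lemma comm_a_aw (q : ℕ) (hq : 1 ≤ q) (n m : ℤ) :
    ⁅ξ (2^q)^n, w * ξ (2^q)^m⁆ = ξ (2^q)^(2*n) := by
  rw [commutatorElement_def, winv q hq, ← _root_.zpow_neg, f1, f2, f3 q hq,
    show (2:ℤ)^(q-1) + (m + 2^(q-1)) - (m - n + -n) = 2^q + 2*n from by
      rw [pow_qsub1 q hq]; ring,
    _root_.zpow_add, apow q, one_mul]

lemma comm_aw_aw (q : ℕ) (hq : 1 ≤ q) (n m : ℤ) :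
    ⁅w * ξ (2^q)^n, w * ξ (2^q)^m⁆ = ξ (2^q)^(2*(m-n)) := by
  rw [commutatorElement_def, winv q hq, winv q hq, f3 q hq, f1, f3 q hq,
    show (2:ℤ)^(q-1) + (m + 2^(q-1)) - (n + 2^(q-1) - ((2:ℤ)^(q-1) + m - n)) = 2^q + 2*(m-n) from by
      rw [pow_qsub1 q hq]; ring,
    _root_.zpow_add, apow q, one_mul]

lemma genQ_mem (q : ℕ) (hq : 1 ≤ q) {x : SU2} (hx : x ∈ genQ q) :
    (∃ n : ℤ, x = ξ (2^q)^n) ∨ (∃ n : ℤ, x = w * ξ (2^q)^n) := by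
  induction hx using Subgroup.closure_induction with
  | mem x hx =>
      simp only [Set.mem_insert_iff, Set.mem_singleton_iff] at hx
      rcases hx with rfl | rfl
      · exact Or.inl ⟨1, by rw [zpow_one]⟩
      · exact Or.inr ⟨0, by rw [zpow_zero, mul_one]⟩
  | one => exact Or.inl ⟨0, (zpow_zero _).symm⟩
  | mul x y hx hy ihx ihy =>
      rcases ihx with ⟨n, rfl⟩ | ⟨n, rfl⟩ <;> rcases ihy with ⟨m, rfl⟩ | ⟨m, rfl⟩
      · exact Or.inl ⟨n+m, f0 q n m⟩
      · exact Or.inr ⟨m-n, f1 q n m⟩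
      · exact Or.inr ⟨n+m, f2 q n m⟩
      · exact Or.inl ⟨(2:ℤ)^(q-1)+m-n, f3 q hq n m⟩
  | inv x hx ihx =>
      rcases ihx with ⟨n, rfl⟩ | ⟨n, rfl⟩
      · exact Or.inl ⟨-n, (_root_.zpow_neg _ _).symm⟩
      · exact Or.inr ⟨n+(2:ℤ)^(q-1), winv q hq n⟩

lemma xi_as_pow (s q : ℕ) (hsq : s ≤ q) : ξ (2^s) = ξ (2^q) ^ ((2:ℤ)^(q-s)) := by
  have h := xi_pow s (q-s)
  rw [show s + (q-s) = q from by omega] at h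
  rw [← h, ← zpow_natCast]
  norm_cast

lemma pow_sub_succ (q s : ℕ) (hs : 1 ≤ s) (hsq : s ≤ q) :
    (2:ℤ) * 2^(q-s) = 2^(q-(s-1)) := by
  rw [show q - (s-1) = (q-s)+1 from by omega, pow_succ]
  ring

lemma step (q s : ℕ) (hs : 1 ≤ s) (hsq : s ≤ q) :
    ⁅μ (2^s), genQ q⁆ = μ (2^(s-1)) := by
  have hq : 1 ≤ q := le_trans hs hsq
  have hxs : ξ (2^s) = ξ (2^q) ^ ((2:ℤ)^(q-s)) := xi_as_pow s q hsq
  have hxs1 : ξ (2^(s-1)) = ξ (2^q) ^ ((2:ℤ)^(q-(s-1))) :=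
    xi_as_pow (s-1) q (le_trans (Nat.sub_le s 1) hsq)
  apply le_antisymm
  · rw [Subgroup.commutator_le]
    intro g hg h hh
    obtain ⟨j, rfl⟩ := Subgroup.mem_zpowers_iff.mp hg
    rcases genQ_mem q hq hh with ⟨m, rfl⟩ | ⟨m, rfl⟩
    · rw [hxs, ← _root_.zpow_mul, comm_a_a]
      exact one_mem _
    · rw [hxs, ← _root_.zpow_mul, comm_a_aw q hq]
      refine Subgroup.mem_zpowers_iff.mpr ⟨j, ?_⟩
      rw [hxs1, ← _root_.zpow_mul, ← mul_assoc, pow_sub_succ q s hs hsq]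
  · rw [μ, Subgroup.zpowers_le]
    have hc : ξ (2^(s-1)) = ⁅ξ (2^s), w⁆ := by
      rw [hxs, show w = w * ξ (2^q) ^ (0:ℤ) from by rw [zpow_zero, mul_one],
        comm_a_aw q hq, hxs1, ← pow_sub_succ q s hs hsq, _root_.zpow_mul]
    rw [hc]
    exact Subgroup.commutator_mem_commutator (Subgroup.mem_zpowers _)
      (Subgroup.subset_closure (by simp))

lemma base (q : ℕ) (hq : 1 ≤ q) : ⁅genQ q, genQ q⁆ = μ (2^(q-1)) := by
  have hxs1 : ξ (2^(q-1)) = ξ (2^q) ^ (2:ℤ) := by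
    have h := xi_as_pow (q-1) q (Nat.sub_le q 1)
    rw [show q - (q-1) = 1 from by omega] at h
    rw [h]
    norm_num
  have hmem : ∀ n : ℤ, ξ (2^q) ^ (2*n) ∈ μ (2^(q-1)) := by
    intro n
    refine Subgroup.mem_zpowers_iff.mpr ⟨n, ?_⟩
    rw [hxs1, ← _root_.zpow_mul]
  apply le_antisymm
  · rw [Subgroup.commutator_le]
    intro g hg h hh
    rcases genQ_mem q hq hg with ⟨n, rfl⟩ | ⟨n, rfl⟩ <;>
      rcases genQ_mem q hq hh with ⟨m, rfl⟩ | ⟨m, rfl⟩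
    · rw [comm_a_a]; exact one_mem _
    · rw [comm_a_aw q hq]; exact hmem n
    · rw [← commutatorElement_inv, comm_a_aw q hq]
      exact inv_mem (hmem m)
    · rw [comm_aw_aw q hq]; exact hmem (m-n)
  · rw [μ, Subgroup.zpowers_le]
    have hc : ξ (2^(q-1)) = ⁅ξ (2^q), w⁆ := by
      rw [show ξ (2^q) = ξ (2^q) ^ (1:ℤ) from (zpow_one _).symm,
        show w = w * ξ (2^q) ^ (0:ℤ) from by rw [zpow_zero, mul_one],
        comm_a_aw q hq, hxs1]
      norm_num
    rw [hc]
    exact Subgroup.commutator_mem_commutator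
      (Subgroup.subset_closure (by simp)) (Subgroup.subset_closure (by simp))


/-- For `q ≥ 1` and `1 ≤ r ≤ q`, one has `Γ^{r+1}(Q_{2^{q+1}}) = μ_{2^{q-r}}`; in particular
`Q_{2^{q+1}}` has nilpotency class exactly `q`
(i.e. `Γ^{q+1}` is trivial but `Γ^q` is not). -/
theorem stmt3 (q : ℕ) (hq : 1 ≤ q) :
    (∀ r : ℕ, 1 ≤ r → r ≤ q → lcs (genQ q) r = μ (2 ^ (q - r))) ∧
      (lcs (genQ q) q = ⊥ ∧ lcs (genQ q) (q - 1) ≠ ⊥) := by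

  have main : ∀ r : ℕ, 1 ≤ r → r ≤ q → lcs (genQ q) r = μ (2 ^ (q - r)) := by
    intro r
    induction r with
    | zero => omega
    | succ r ih =>
        intro _ hrq
        show ⁅lcs (genQ q) r, genQ q⁆ = μ (2^(q-(r+1)))
        by_cases hr : r = 0
        · subst hr
          show ⁅genQ q, genQ q⁆ = _
          rw [base q hq]
        · have h1 : 1 ≤ r := Nat.one_le_iff_ne_zero.mpr hr
          rw [ih h1 (by omega)]
          have h := step q (q - r) (by omega) (by omega)
          rw [show q - r - 1 = q - (r+1) from by omega] at h
          exact h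
  refine ⟨main, ?_, ?_⟩
  · rw [main q hq le_rfl, Nat.sub_self, pow_zero, μ]
    exact Subgroup.zpowers_eq_bot.mpr xi_one_eq
  · by_cases h1 : q = 1
    · subst h1
      show genQ 1 ≠ ⊥
      intro hbot
      have hw : w ∈ genQ 1 := Subgroup.subset_closure (by simp)
      rw [hbot, Subgroup.mem_bot] at hw
      exact w_ne_one hw
    · have h := main (q-1) (by omega) (by omega)
      rw [show q - (q-1) = 1 from by omega] at h
      rw [h, pow_one, μ]
      intro hbot
      exact xi_two_ne_one (Subgroup.zpowers_eq_bot.mp hbot)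

end
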